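/- With the splitting R = R_+ ⊕ R_− of the ring of pseudodifferential operators as above (R_+ a subring, P_+(R_−·R_−) = 0), if A, B ∈ R commute, then [A_+, B]_+ − [B_+, A]_+ = [A_+, B_+], where X_+ = P_+(X). -/
import Mathlib

/-- If `A, B` commute then `[A₊, B]₊ − [B₊, A]₊ = [A₊, B₊]`. -/
theorem stmt10 {R : Type*} [Ring R] (P : R → R)
    (haddP : ∀ x y : R, P (x + y) = P x + P y)
    (hidem : ∀ x : R, P (P x) = P x)
    (hsubring : ∀ x y : R, P (P x * P y) = P x * P y)
    (hminus : ∀ x y : R, P ((x - P x) * (y - P y)) = 0)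
    (a b : R) (hab : a * b = b * a) :
    P (P a * b - b * P a) - P (P b * a - a * P b)
      = P a * P b - P b * P a := by
  have h0 : P 0 = 0 := by
    have h := haddP 0 0
    rw [add_zero] at h
    nth_rewrite 1 [← add_zero (P 0)] at h
    exact (add_left_cancel h).symm
  have hneg : ∀ x : R, P (-x) = -P x := by
    intro x
    have h := haddP x (-x)
    rw [add_neg_cancel, h0] at h
    exact eq_neg_of_add_eq_zero_right h.symm
  have hsub : ∀ x y : R, P (x - y) = P x - P y := by
    intro x y
    rw [sub_eq_add_neg, haddP, hneg, sub_eq_add_neg]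
  -- key algebraic identity
  have key : P a * b - b * P a - (P b * a - a * P b)
      = (P a * P b - P b * P a)
        - ((a - P a) * (b - P b) - (b - P b) * (a - P a)) := by
    have h := hab
    noncomm_ring
    linear_combination (norm := noncomm_ring) h
  calc P (P a * b - b * P a) - P (P b * a - a * P b)
      = P (P a * b - b * P a - (P b * a - a * P b)) := by rw [hsub (P a * b - b * P a)]
    _ = P ((P a * P b - P b * P a)
        - ((a - P a) * (b - P b) - (b - P b) * (a - P a))) := by rw [key]
    _ = P (P a * P b) - P (P b * P a)
        - (P ((a - P a) * (b - P b)) - P ((b - P b) * (a - P a))) := by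
        rw [hsub, hsub, hsub]
    _ = P a * P b - P b * P a := by rw [hsubring, hsubring, hminus, hminus]; noncomm_ring
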